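/- Let (X,d) be a finite metric space and m ∈ ℕ. Then c_1^{m,dom}(X,d) < ∞ if and only if X admits a biLipschitz embedding into ℓ1^m. Quantitatively, c_{ℓ1^m}(X,d) ≤ c_1^{m,dom}(X,d) ≤ m·c_{ℓ1^m}(X,d). Moreover, for each p ≥ 1, c_{ℓp^m}(X,d) ≤ c_1^{m,dom}(X,d) ≤ m^{2−1/p}·c_{ℓp^m}(X,d). -/

import Mathlib

open Metric Set
open scoped Classical ENNReal NNReal

noncomputable section

/-- The underlying set of the lamplighter space over `X`: a lamp configuration
(a finite set of lit lamps) together with the position of the lamplighter. -/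
abbrev Lamp (X : Type*) := Finset X × X

namespace Lamplighter

variable {X Y Z : Type*}

/-- The length of the path visiting the points of a list in order,
with respect to the distance function `d`. -/
def pathLength (d : X → X → ℝ) : List X → ℝ
  | [] => 0
  | [_] => 0
  | x :: y :: l => d x y + pathLength d (y :: l)

/-- The symmetric difference of the lamp configurations of `p` and `q`, as a set. -/
def sd (p q : Lamp X) : Set X :=
  ((p.1 : Set X) \ (q.1 : Set X)) ∪ ((q.1 : Set X) \ (p.1 : Set X))

/-- The traveling salesman semimetric on the lamplighter space:
the infimum of lengths of finite paths starting at `p.2`, ending at `q.2`, and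
visiting every point of the symmetric difference of the configurations. -/
def TSP (d : X → X → ℝ) (p q : Lamp X) : ℝ :=
  sInf { s : ℝ | ∃ l : List X, l.head? = some p.2 ∧ l.getLast? = some q.2 ∧
    (∀ a ∈ sd p q, a ∈ l) ∧ s = pathLength d l }

/-- The diameter (in `ℝ≥0∞`) of a set with respect to a distance function `d`. -/
def ediamD (d : X → X → ℝ) (A : Set X) : ℝ≥0∞ :=
  ⨆ x ∈ A, ⨆ y ∈ A, ENNReal.ofReal (d x y)

/-- The traveling salesman shortcut semimetric:
`TSCP((A,x),(B,y)) = diam({x,y} ∪ (A Δ B))`. -/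
def TSCP (d : X → X → ℝ) (p q : Lamp X) : ℝ :=
  (ediamD d ({p.2, q.2} ∪ sd p q)).toReal

/-- `ρ((A,x),(B,y))` is `0` if `A = B` and `1` otherwise. -/
def rho (p q : Lamp X) : ℝ := if p.1 = q.1 then 0 else 1

/-- The lamplighter metric `d_La = TSP + ρ`. -/
def dLa (d : X → X → ℝ) (p q : Lamp X) : ℝ := TSP d p q + rho p q

/-- `X` is `K`-TSP-efficient if `TSP ≤ K • TSCP` on `La(X)²`. -/
def TSPEfficient (d : X → X → ℝ) (K : ℝ) : Prop :=
  ∀ p q : Lamp X, TSP d p q ≤ K * TSCP d p q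

/-- A weak `C`-biLipschitz embedding between spaces with distance functions `dY`, `dZ`:
a family of maps `φ t : Y → Z` (for `t > 0`) such that each `φ t` is `σ t`-Lipschitz
and `dY x y ≥ C*t` implies `dZ (φ t x) (φ t y) ≥ t * σ t`. -/
def WeakBiLip (dY : Y → Y → ℝ) (dZ : Z → Z → ℝ) (C : ℝ) : Prop :=
  ∃ φ : ℝ → Y → Z, ∀ t : ℝ, 0 < t → ∃ σ : ℝ, 0 < σ ∧
    (∀ x y : Y, dZ (φ t x) (φ t y) ≤ σ * dY x y) ∧
    (∀ x y : Y, C * t ≤ dY x y → t * σ ≤ dZ (φ t x) (φ t y))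

/-- `f` is a `C`-biLipschitz embedding (an injective map of biLipschitz
distortion at most `C`, allowing an overall scaling factor `s`). -/
def BiLipWith (dY : Y → Y → ℝ) (dZ : Z → Z → ℝ) (C : ℝ) (f : Y → Z) : Prop :=
  Function.Injective f ∧ ∃ s : ℝ, 0 < s ∧
    ∀ x y : Y, s * dY x y ≤ dZ (f x) (f y) ∧ dZ (f x) (f y) ≤ C * s * dY x y

/-- Nagata dimension at most `n` with constant at most `γ`: for every scale `s > 0`
there is a covering by sets of diameter at most `γ s` such that every set of diameter
less than `s` meets at most `n + 1` members of the covering. -/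
def NagataDimD (d : Y → Y → ℝ) (n : ℕ) (γ : ℝ) : Prop :=
  ∀ s : ℝ, 0 < s → ∃ B : Set (Set Y),
    (∀ y : Y, ∃ b ∈ B, y ∈ b) ∧
    (∀ b ∈ B, ediamD d b ≤ ENNReal.ofReal (γ * s)) ∧
    (∀ A : Set Y, ediamD d A < ENNReal.ofReal s →
      {b | b ∈ B ∧ (b ∩ A).Nonempty}.encard ≤ ((n : ℕ∞) + 1))

/-- Markov type 2 with constant `M`, for the distance function `d`: for every stationary
reversible Markov chain on a finite state space (given by a stationary distribution `μ`
and a reversible stochastic transition matrix `P`), every map `f` into the space, and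
every time `t`, `E[d(f(Z_t),f(Z_0))²] ≤ M² t E[d(f(Z_1),f(Z_0))²]`. -/
def HasMarkovType2 (d : Y → Y → ℝ) (M : ℝ) : Prop :=
  ∀ (n : ℕ) (μ : Fin n → ℝ) (P : Matrix (Fin n) (Fin n) ℝ),
    (∀ i, 0 ≤ μ i) → (∑ i, μ i) = 1 →
    (∀ i j, 0 ≤ P i j) → (∀ i, (∑ j, P i j) = 1) →
    (∀ i j, μ i * P i j = μ j * P j i) →
    ∀ (f : Fin n → Y) (t : ℕ),
      (∑ i, ∑ j, μ i * (P ^ t) i j * d (f i) (f j) ^ 2) ≤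
        M ^ 2 * t * ∑ i, ∑ j, μ i * P i j * d (f i) (f j) ^ 2

/-- `D`-doubling: every ball of radius `r` can be covered by `D` balls of radius `r/2`. -/
def Doubling (d : Y → Y → ℝ) (D : ℕ) : Prop :=
  ∀ r : ℝ, 0 < r → ∀ x : Y, ∃ c : Fin D → Y,
    ∀ y : Y, d x y ≤ r → ∃ i, d (c i) y ≤ r / 2

/-- `A` is an arc from `x` to `y`: the image of an injective continuous map of `[0,1]`
sending the endpoints to `x` and `y`. -/
def IsArc {T : Type*} [MetricSpace T] (x y : T) (A : Set T) : Prop :=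
  ∃ γ : ℝ → T, ContinuousOn γ (Icc 0 1) ∧ InjOn γ (Icc 0 1) ∧
    γ 0 = x ∧ γ 1 = y ∧ γ '' (Icc 0 1) = A

/-- `A` is a geodesic segment from `x` to `y`: the image of an isometric embedding
of `[0, dist x y]` sending the endpoints to `x` and `y`. -/
def IsGeodesicSeg {T : Type*} [MetricSpace T] (x y : T) (A : Set T) : Prop :=
  ∃ γ : ℝ → T, γ 0 = x ∧ γ (dist x y) = y ∧
    (∀ s ∈ Icc (0 : ℝ) (dist x y), ∀ t ∈ Icc (0 : ℝ) (dist x y),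
      dist (γ s) (γ t) = |s - t|) ∧
    γ '' (Icc 0 (dist x y)) = A

/-- `T` is an ℝ-tree: any two (distinct) points are joined by a unique arc,
and this arc is a geodesic. -/
def IsRTree (T : Type*) [MetricSpace T] : Prop :=
  ∀ x y : T, x ≠ y →
    (∃ A : Set T, IsArc x y A) ∧
    (∀ A A' : Set T, IsArc x y A → IsArc x y A' → A = A') ∧
    (∀ A : Set T, IsArc x y A → IsGeodesicSeg x y A)

/-- The sup (ℓ∞-product) distance on a finite product of metric spaces. -/
def piSupDist {n : ℕ} {T : Fin n → Type*} (I : ∀ i, MetricSpace (T i)) :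
    (∀ i, T i) → (∀ i, T i) → ℝ :=
  letI := I
  fun f g => dist f g

/-- The ℓ1-product distance on a finite product of metric spaces. -/
def piL1Dist {n : ℕ} {T : Fin n → Type*} (I : ∀ i, MetricSpace (T i)) :
    (∀ i, T i) → (∀ i, T i) → ℝ :=
  letI := I
  fun f g => ∑ i, dist (f i) (g i)

/-- The ℓ1 distance on `ℝ^m`. -/
def l1Dist (m : ℕ) (x y : Fin m → ℝ) : ℝ := ∑ i, |x i - y i|

/-- The ℓp distance on `ℝ^m`. -/
def lpDist (m : ℕ) (p : ℝ) (x y : Fin m → ℝ) : ℝ :=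
  (∑ i, |x i - y i| ^ p) ^ (1 / p)

/-- The (pseudo)distance of the ℝ-star over the index type `ι`: the wedge sum of
copies of `[0,∞)` indexed by `ι`, glued at `0`. -/
def starDist {ι : Type*} (p q : ι × ℝ≥0) : ℝ :=
  if p.1 = q.1 then |(p.2 : ℝ) - (q.2 : ℝ)| else (p.2 : ℝ) + (q.2 : ℝ)

/-- The sup (ℓ∞-product) of finitely many distance functions. -/
def supD {n : ℕ} {T : Fin n → Type*} (d : ∀ i, T i → T i → ℝ) (f g : ∀ i, T i) : ℝ :=
  ((Finset.univ.sup fun i => (d i (f i) (g i)).toNNReal : ℝ≥0) : ℝ)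

/-- The infimum of distortions of biLipschitz embeddings of `(Y, dY)` into `(Z, dZ)`
(`∞` if there is no such embedding). -/
def cEmb (dY : Y → Y → ℝ) (dZ : Z → Z → ℝ) : ℝ≥0∞ :=
  sInf { D : ℝ≥0∞ | ∃ C : ℝ, 0 < C ∧ D = ENNReal.ofReal C ∧
    ∃ f : Y → Z, BiLipWith dY dZ C f }

/-- `c_1^{m,dom}(X,d)`: the infimum of all `D > 0` such that there exist injective
`1`-Lipschitz maps `φ i : X → ℝ` and weights `α i ≥ 0` summing to `1` with
`∑ i, α i * |φ i x - φ i y| ≥ d x y / D` for all `x y` (`∞` if there is none). -/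
def c1dom (d : X → X → ℝ) (m : ℕ) : ℝ≥0∞ :=
  sInf { D : ℝ≥0∞ | ∃ C : ℝ, 0 < C ∧ D = ENNReal.ofReal C ∧
    ∃ (φ : Fin m → X → ℝ) (α : Fin m → ℝ),
      (∀ i, Function.Injective (φ i)) ∧
      (∀ i, ∀ x y : X, |φ i x - φ i y| ≤ d x y) ∧
      (∀ i, 0 ≤ α i) ∧ (∑ i, α i) = 1 ∧
      ∀ x y : X, d x y / C ≤ ∑ i, α i * |φ i x - φ i y| }

/-- The Hamming distance on the Hamming cube `{0,1}^M`, as a real number. -/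
def hamDist {M : ℕ} (x y : Fin M → Bool) : ℝ :=
  ((Finset.univ.filter fun i => x i ≠ y i).card : ℝ)

/-- The star graph `St_{n,k}`: the one-point coalescence of `n` paths of length `k`,
realized inside `ℤ^n` as the multiples `α eᵢ` with `0 ≤ α ≤ k`. -/
def St (n k : ℕ) : Type :=
  {x : Fin n → ℤ // ∃ i : Fin n, (∀ j : Fin n, j ≠ i → x j = 0) ∧ 0 ≤ x i ∧ x i ≤ (k : ℤ)}

/-- The ℓ1 metric on the star graph `St_{n,k}`. -/
def stDist {n k : ℕ} (x y : St n k) : ℝ := ∑ j, |(x.1 j : ℝ) - (y.1 j : ℝ)|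

/-- The endpoint `k eᵢ` of the `i`-th branch of the star graph. -/
def St.endpoint {n k : ℕ} (i : Fin n) : St n k :=
  ⟨fun j => if j = i then (k : ℤ) else 0, i, fun j hj => if_neg hj, by simp, by simp⟩

/-- The cycle metric on `ℤ/nℤ`. -/
def cycDist {n : ℕ} (a b : ZMod n) : ℝ := ((min ((a - b).val) ((b - a).val) : ℕ) : ℝ)

/-- The rectangular grid `G_{k,n} = ([0,k] ∩ ℤ) × ([0,n] ∩ ℤ)`. -/
def Grid2 (k n : ℕ) : Type :=
  {p : ℤ × ℤ // 0 ≤ p.1 ∧ p.1 ≤ (k : ℤ) ∧ 0 ≤ p.2 ∧ p.2 ≤ (n : ℤ)}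

/-- The ℓ1 metric on the grid `G_{k,n}`. -/
def grid2Dist {k n : ℕ} (x y : Grid2 k n) : ℝ :=
  |(x.1.1 : ℝ) - (y.1.1 : ℝ)| + |(x.1.2 : ℝ) - (y.1.2 : ℝ)|

/-- The `m`-dimensional grid `G^m({n_i}) = ∏ i, ([0, n_i] ∩ ℤ)`. -/
def GridM (m : ℕ) (n : Fin m → ℕ) : Type :=
  {p : Fin m → ℤ // ∀ i, 0 ≤ p i ∧ p i ≤ (n i : ℤ)}

/-- The ℓ1 metric on the `m`-dimensional grid. -/
def gridMDist {m : ℕ} {n : Fin m → ℕ} (x y : GridM m n) : ℝ :=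
  ∑ i, |(x.1 i : ℝ) - (y.1 i : ℝ)|

section Statement10Aux

variable {m : ℕ} {p : ℝ}

lemma l1Dist_eq_lpDist (m : ℕ) : l1Dist m = lpDist m 1 := by
  funext x y
  simp [l1Dist, lpDist]

lemma real_add_rpow_le {a b : ℝ} (ha : 0 ≤ a) (hb : 0 ≤ b) (hp : 1 ≤ p) :
    a ^ p + b ^ p ≤ (a + b) ^ p := by
  have h := NNReal.add_rpow_le_rpow_add (⟨a, ha⟩ : ℝ≥0) (⟨b, hb⟩ : ℝ≥0) hp
  have h2 := NNReal.coe_le_coe.2 h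
  exact h2

lemma sum_rpow_le_rpow_sum {ι : Type*} (s : Finset ι) (f : ι → ℝ) (hf : ∀ i, 0 ≤ f i)
    (hp : 1 ≤ p) : ∑ i ∈ s, f i ^ p ≤ (∑ i ∈ s, f i) ^ p := by
  classical
  induction s using Finset.induction_on with
  | empty => simp only [Finset.sum_empty]; positivity
  | insert _ _ h ih =>
    rw [Finset.sum_insert h, Finset.sum_insert h]
    exact le_trans (add_le_add_right ih _)
      (real_add_rpow_le (hf _) (Finset.sum_nonneg fun i _ => hf i) hp)

lemma coord_le_lp (hp : 1 ≤ p) (x y : Fin m → ℝ) (i : Fin m) :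
    |x i - y i| ≤ lpDist m p x y := by
  have hp0 : 0 < p := lt_of_lt_of_le one_pos hp
  have h1 : |x i - y i| ^ p ≤ ∑ j, |x j - y j| ^ p :=
    Finset.single_le_sum (f := fun j => |x j - y j| ^ p)
      (fun j _ => Real.rpow_nonneg (abs_nonneg _) p) (Finset.mem_univ i)
  have h2 : (|x i - y i| ^ p) ^ (1 / p) ≤ (∑ j, |x j - y j| ^ p) ^ (1 / p) :=
    Real.rpow_le_rpow (Real.rpow_nonneg (abs_nonneg _) p) h1 (by positivity)
  rwa [← Real.rpow_mul (abs_nonneg _), mul_one_div, div_self hp0.ne', Real.rpow_one] at h2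

lemma lp_le_l1 (hp : 1 ≤ p) (x y : Fin m → ℝ) :
    lpDist m p x y ≤ ∑ j, |x j - y j| := by
  have hp0 : 0 < p := lt_of_lt_of_le one_pos hp
  have h1 : ∑ j, |x j - y j| ^ p ≤ (∑ j, |x j - y j|) ^ p :=
    sum_rpow_le_rpow_sum _ _ (fun j => abs_nonneg _) hp
  have h2 : (∑ j, |x j - y j| ^ p) ^ (1 / p) ≤ ((∑ j, |x j - y j|) ^ p) ^ (1 / p) :=
    Real.rpow_le_rpow (Finset.sum_nonneg fun j _ => Real.rpow_nonneg (abs_nonneg _) p) h1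
      (by positivity)
  rwa [← Real.rpow_mul (Finset.sum_nonneg fun j _ => abs_nonneg _), mul_one_div,
    div_self hp0.ne', Real.rpow_one] at h2

set_option maxHeartbeats 1000000 in
/-- Every finite metric space admits an injective `1`-Lipschitz map to `ℝ` which is
biLipschitz (with some constant `C`). -/
lemma exists_good (X : Type*) [MetricSpace X] [Fintype X] :
    ∃ (C : ℝ) (φ : X → ℝ), 0 < C ∧ Function.Injective φ ∧
      (∀ x y : X, |φ x - φ y| ≤ dist x y) ∧
      (∀ x y : X, dist x y ≤ C * |φ x - φ y|) := by
  rcases subsingleton_or_nontrivial X with hX | hX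
  · exact ⟨1, fun _ => 0, one_pos, fun a b _ => Subsingleton.elim a b,
      fun x y => by rw [Subsingleton.elim x y]; simp,
      fun x y => by rw [Subsingleton.elim x y]; simp⟩
  · set h : X → ℝ := fun x => ((Fintype.equivFin X x : ℕ) : ℝ) with hh
    have hinj : Function.Injective h := by
      intro a b hab
      exact (Fintype.equivFin X).injective (Fin.ext (Nat.cast_injective hab))
    obtain ⟨x0, y0, hxy⟩ := exists_pair_ne X
    set S : Finset (X × X) := Finset.univ.filter (fun q => q.1 ≠ q.2) with hSdef
    have hS : S.Nonempty := ⟨(x0, y0), by simp [hSdef, hxy]⟩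
    have habs : ∀ q ∈ S, 0 < |h q.1 - h q.2| := by
      intro q hq
      have hne : q.1 ≠ q.2 := (Finset.mem_filter.1 hq).2
      exact abs_pos.2 (sub_ne_zero.2 fun he => hne (hinj he))
    have hdistpos : ∀ q ∈ S, 0 < dist q.1 q.2 := fun q hq =>
      dist_pos.2 (Finset.mem_filter.1 hq).2
    set c : ℝ := S.inf' hS (fun q => dist q.1 q.2 / |h q.1 - h q.2|) with hcdef
    have hc : 0 < c := (Finset.lt_inf'_iff hS).2 fun q hq =>
      div_pos (hdistpos q hq) (habs q hq)
    set φ : X → ℝ := fun x => c * h x with hφdef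
    have hφinj : Function.Injective φ := fun a b hab => hinj (mul_left_cancel₀ hc.ne' hab)
    have hub : ∀ x y : X, |φ x - φ y| ≤ dist x y := by
      intro x y
      by_cases hxy2 : x = y
      · subst hxy2; simp
      · have hmem : (x, y) ∈ S := by simp [hSdef, hxy2]
        have h1 : c ≤ dist x y / |h x - h y| := Finset.inf'_le _ hmem
        have h2 : 0 < |h x - h y| := habs _ hmem
        calc |φ x - φ y| = c * |h x - h y| := by
              rw [hφdef]; rw [← mul_sub, abs_mul, abs_of_pos hc]
          _ ≤ (dist x y / |h x - h y|) * |h x - h y| :=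
              mul_le_mul_of_nonneg_right h1 h2.le
          _ = dist x y := div_mul_cancel₀ _ h2.ne'
    set Cm : ℝ := max 1 (S.sup' hS (fun q => dist q.1 q.2 / (c * |h q.1 - h q.2|))) with hCm
    refine ⟨Cm, φ, lt_of_lt_of_le one_pos (le_max_left _ _), hφinj, hub, ?_⟩
    intro x y
    by_cases hxy2 : x = y
    · subst hxy2; simp
    · have hmem : (x, y) ∈ S := by simp [hSdef, hxy2]
      have h2 : 0 < |h x - h y| := habs _ hmem
      have h3 : dist x y / (c * |h x - h y|) ≤ Cm :=
        le_trans (Finset.le_sup' (fun q => dist q.1 q.2 / (c * |h q.1 - h q.2|)) hmem)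
          (le_max_right _ _)
      have h4 : 0 < c * |h x - h y| := mul_pos hc h2
      have h5 := (div_le_iff₀ h4).1 h3
      have h6 : c * |h x - h y| = |φ x - φ y| := by
        rw [hφdef]; rw [← mul_sub, abs_mul, abs_of_pos hc]
      rw [← h6]
      exact h5

lemma c1dom_ne_top' {X : Type*} [MetricSpace X] [Fintype X] (hm : 1 ≤ m) :
    c1dom (dist : X → X → ℝ) m ≠ ⊤ := by
  obtain ⟨C0, φ0, hC0, hinj, hlip, hlow⟩ := exists_good X
  have hm0 : (m : ℝ) ≠ 0 := Nat.cast_ne_zero.2 (by omega)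
  have hmem : ENNReal.ofReal C0 ∈ { D : ℝ≥0∞ | ∃ C : ℝ, 0 < C ∧ D = ENNReal.ofReal C ∧
      ∃ (φ : Fin m → X → ℝ) (α : Fin m → ℝ),
        (∀ i, Function.Injective (φ i)) ∧
        (∀ i, ∀ x y : X, |φ i x - φ i y| ≤ dist x y) ∧
        (∀ i, 0 ≤ α i) ∧ (∑ i, α i) = 1 ∧
        ∀ x y : X, dist x y / C ≤ ∑ i, α i * |φ i x - φ i y| } := by
    refine ⟨C0, hC0, rfl, fun _ => φ0, fun _ => 1 / m, fun _ => hinj, fun _ => hlip,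
      fun _ => by positivity, ?_, ?_⟩
    · rw [Finset.sum_const, Finset.card_univ, Fintype.card_fin, nsmul_eq_mul]
      field_simp
    · intro x y
      have : ∑ i : Fin m, (1 / (m : ℝ)) * |φ0 x - φ0 y| = |φ0 x - φ0 y| := by
        rw [Finset.sum_const, Finset.card_univ, Fintype.card_fin, nsmul_eq_mul]
        field_simp
      rw [this, div_le_iff₀ hC0, mul_comm]
      exact hlow x y
  exact ne_top_of_le_ne_top ENNReal.ofReal_ne_top (sInf_le hmem)

lemma exists_emb {X : Type*} [MetricSpace X] [Fintype X] (hm : 1 ≤ m) :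
    ∃ (C : ℝ) (f : X → Fin m → ℝ), BiLipWith (dist : X → X → ℝ) (l1Dist m) C f := by
  obtain ⟨C0, φ0, hC0, hinj, hlip, hlow⟩ := exists_good X
  have hmR : (0 : ℝ) < m := by exact_mod_cast (by omega : 0 < m)
  refine ⟨C0, fun x _ => φ0 x, fun a b hab => hinj (congrFun hab ⟨0, by omega⟩),
    ⟨m / C0, div_pos hmR hC0, ?_⟩⟩
  intro x y
  have hl1 : l1Dist m (fun _ => φ0 x) (fun _ => φ0 y) = m * |φ0 x - φ0 y| := by
    rw [l1Dist, Finset.sum_const, Finset.card_univ, Fintype.card_fin, nsmul_eq_mul]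
  constructor
  · rw [hl1]
    have h1 : dist x y / C0 ≤ |φ0 x - φ0 y| := by
      rw [div_le_iff₀ hC0, mul_comm]; exact hlow x y
    calc m / C0 * dist x y = m * (dist x y / C0) := by ring
      _ ≤ m * |φ0 x - φ0 y| := by
          exact mul_le_mul_of_nonneg_left h1 hmR.le
  · rw [hl1]
    calc (m : ℝ) * |φ0 x - φ0 y| ≤ m * dist x y :=
          mul_le_mul_of_nonneg_left (hlip x y) hmR.le
      _ = C0 * (m / C0) * dist x y := by field_simp
      _ = C0 * (↑m / C0) * dist x y := rfl

lemma cEmb_le_c1dom {X : Type*} [MetricSpace X] [Fintype X] (hp : 1 ≤ p) :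
    cEmb (dist : X → X → ℝ) (lpDist m p) ≤ c1dom (dist : X → X → ℝ) m := by
  apply sInf_le_sInf
  rintro D ⟨C, hC, rfl, φ, α, hinj, hlip, hα0, hα1, hlow⟩
  have hp0 : 0 < p := lt_of_lt_of_le one_pos hp
  refine ⟨C, hC, rfl, fun x i => α i ^ (1 / p) * φ i x, ?_, 1 / C, by positivity, ?_⟩
  · intro x y hxy
    have hsum : (∑ i, α i) ≠ 0 := by rw [hα1]; norm_num
    obtain ⟨i, _, hi⟩ := Finset.exists_ne_zero_of_sum_ne_zero hsum
    have hipos : 0 < α i ^ (1 / p) :=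
      Real.rpow_pos_of_pos (lt_of_le_of_ne (hα0 i) (Ne.symm hi)) _
    exact hinj i (mul_left_cancel₀ hipos.ne' (congrFun hxy i))
  · intro x y
    have hterm : ∀ i : Fin m,
        |α i ^ (1 / p) * φ i x - α i ^ (1 / p) * φ i y| ^ p = α i * |φ i x - φ i y| ^ p := by
      intro i
      rw [← mul_sub, abs_mul, abs_of_nonneg (Real.rpow_nonneg (hα0 i) _),
        Real.mul_rpow (Real.rpow_nonneg (hα0 i) _) (abs_nonneg _),
        ← Real.rpow_mul (hα0 i), one_div_mul_cancel hp0.ne', Real.rpow_one]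
    have hlp : lpDist m p (fun i => α i ^ (1 / p) * φ i x)
        (fun i => α i ^ (1 / p) * φ i y) = (∑ i, α i * |φ i x - φ i y| ^ p) ^ (1 / p) := by
      rw [lpDist]
      congr 1
      exact Finset.sum_congr rfl fun i _ => hterm i
    constructor
    · rw [hlp]
      have hpm := Real.arith_mean_le_rpow_mean Finset.univ α
        (fun i => |φ i x - φ i y|) (fun i _ => hα0 i) hα1 (fun i _ => abs_nonneg _) hp
      calc 1 / C * dist x y = dist x y / C := by ring
        _ ≤ ∑ i, α i * |φ i x - φ i y| := hlow x y
        _ ≤ (∑ i, α i * |φ i x - φ i y| ^ p) ^ (1 / p) := hpm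
    · rw [hlp]
      have h1 : ∑ i, α i * |φ i x - φ i y| ^ p ≤ dist x y ^ p := by
        calc ∑ i, α i * |φ i x - φ i y| ^ p ≤ ∑ i, α i * dist x y ^ p := by
              refine Finset.sum_le_sum fun i _ => ?_
              exact mul_le_mul_of_nonneg_left
                (Real.rpow_le_rpow (abs_nonneg _) (hlip i x y) hp0.le) (hα0 i)
          _ = dist x y ^ p := by rw [← Finset.sum_mul, hα1, one_mul]
      have h2 : (∑ i, α i * |φ i x - φ i y| ^ p) ^ (1 / p) ≤ (dist x y ^ p) ^ (1 / p) :=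
        Real.rpow_le_rpow (Finset.sum_nonneg fun i _ =>
          mul_nonneg (hα0 i) (Real.rpow_nonneg (abs_nonneg _) _)) h1 (by positivity)
      rw [← Real.rpow_mul dist_nonneg, mul_one_div, div_self hp0.ne', Real.rpow_one] at h2
      calc (∑ i, α i * |φ i x - φ i y| ^ p) ^ (1 / p) ≤ dist x y := h2
        _ = C * (1 / C) * dist x y := by field_simp

lemma c1dom_le_of_biLip {X : Type*} [MetricSpace X] [Fintype X] (hp : 1 ≤ p) (hm : 1 ≤ m)
    {C : ℝ} (hC : 0 < C) {f : X → Fin m → ℝ}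
    (hf : BiLipWith (dist : X → X → ℝ) (lpDist m p) C f) :
    c1dom (dist : X → X → ℝ) m ≤ ENNReal.ofReal (m * C) := by
  obtain ⟨hfinj, s, hs, hbd⟩ := hf
  obtain ⟨C0, φ0, hC0, hφ0inj, hφ0lip, hφ0low⟩ := exists_good X
  have hmR : (0 : ℝ) < m := by exact_mod_cast (by omega : 0 < m)
  have hA : (0 : ℝ) < m * C := mul_pos hmR hC
  apply ENNReal.le_of_forall_pos_le_add
  intro ε hε _
  set ε' : ℝ := (ε : ℝ) with hε'def
  have hε' : 0 < ε' := hε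
  set A : ℝ := m * C with hAdef
  set B : ℝ := A + ε' with hBdef
  have hB : 0 < B := by positivity
  set ε0 : ℝ := ε' / (A * (1 + B)) with hε0def
  have hε0 : 0 < ε0 := by positivity
  -- the coordinate maps, rescaled to be 1-Lipschitz
  set ψ : Fin m → X → ℝ := fun i x => f x i / (C * s) with hψdef
  have hCs : 0 < C * s := mul_pos hC hs
  have hψlip : ∀ i, ∀ x y : X, |ψ i x - ψ i y| ≤ dist x y := by
    intro i x y
    have h1 : |f x i - f y i| ≤ lpDist m p (f x) (f y) := coord_le_lp hp _ _ i
    have h2 : lpDist m p (f x) (f y) ≤ C * s * dist x y := (hbd x y).2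
    rw [hψdef]
    rw [div_sub_div_same, abs_div, abs_of_pos hCs, div_le_iff₀ hCs]
    calc |f x i - f y i| ≤ C * s * dist x y := le_trans h1 h2
      _ = dist x y * (C * s) := by ring
  have hψlow : ∀ x y : X, dist x y / A ≤ ∑ i, (1 / (m : ℝ)) * |ψ i x - ψ i y| := by
    intro x y
    have h1 : lpDist m p (f x) (f y) ≤ ∑ i, |f x i - f y i| := lp_le_l1 hp _ _
    have h2 : s * dist x y ≤ lpDist m p (f x) (f y) := (hbd x y).1
    have h3 : ∑ i, (1 / (m : ℝ)) * |ψ i x - ψ i y| =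
        (∑ i, |f x i - f y i|) / (m * (C * s)) := by
      rw [Finset.sum_div]
      refine Finset.sum_congr rfl fun i _ => ?_
      rw [hψdef]
      rw [div_sub_div_same, abs_div, abs_of_pos hCs]
      ring
    rw [h3, hAdef, div_le_div_iff₀ hA (by positivity)]
    calc dist x y * (m * (C * s)) = (s * dist x y) * (m * C) := by ring
      _ ≤ lpDist m p (f x) (f y) * (m * C) :=
          mul_le_mul_of_nonneg_right h2 hA.le
      _ ≤ (∑ i, |f x i - f y i|) * (m * C) :=
          mul_le_mul_of_nonneg_right h1 hA.le
  -- choose a perturbation parameter avoiding the finitely many bad values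
  have hbadfin : (Set.range (fun q : Fin m × X × X =>
      (ψ q.1 q.2.2 - ψ q.1 q.2.1) / (φ0 q.2.1 - φ0 q.2.2))).Finite := Set.finite_range _
  obtain ⟨δ, hδmem⟩ := ((Set.Ioo_infinite hε0).diff hbadfin).nonempty
  obtain ⟨⟨hδ0, hδε0⟩, hδbad⟩ := hδmem
  have h1δ : (0 : ℝ) < 1 + δ := by linarith
  set φ : Fin m → X → ℝ := fun i x => (ψ i x + δ * φ0 x) / (1 + δ) with hφdef
  -- injectivity
  have hφinj : ∀ i, Function.Injective (φ i) := by
    intro i a b hab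
    by_contra hne
    have hφ0ne : φ0 a - φ0 b ≠ 0 := sub_ne_zero.2 fun he => hne (hφ0inj he)
    have h2 : ψ i a + δ * φ0 a = ψ i b + δ * φ0 b := by
      have h := congrArg (fun t : ℝ => t * (1 + δ)) hab
      simp only [hφdef] at h
      rw [div_mul_cancel₀ _ h1δ.ne', div_mul_cancel₀ _ h1δ.ne'] at h
      exact h
    have h3 : δ = (ψ i b - ψ i a) / (φ0 a - φ0 b) := by
      rw [eq_div_iff hφ0ne]
      linear_combination h2
    exact hδbad ⟨(i, a, b), h3.symm⟩
  -- 1-Lipschitz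
  have hφlip : ∀ i, ∀ x y : X, |φ i x - φ i y| ≤ dist x y := by
    intro i x y
    rw [hφdef]
    rw [div_sub_div_same, abs_div, abs_of_pos h1δ, div_le_iff₀ h1δ]
    have h1 : |ψ i x + δ * φ0 x - (ψ i y + δ * φ0 y)| ≤
        |ψ i x - ψ i y| + δ * |φ0 x - φ0 y| := by
      calc |ψ i x + δ * φ0 x - (ψ i y + δ * φ0 y)|
          = |(ψ i x - ψ i y) + δ * (φ0 x - φ0 y)| := by ring_nf
        _ ≤ |ψ i x - ψ i y| + |δ * (φ0 x - φ0 y)| := abs_add_le _ _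
        _ = |ψ i x - ψ i y| + δ * |φ0 x - φ0 y| := by
            rw [abs_mul, abs_of_pos hδ0]
    calc |ψ i x + δ * φ0 x - (ψ i y + δ * φ0 y)|
        ≤ |ψ i x - ψ i y| + δ * |φ0 x - φ0 y| := h1
      _ ≤ dist x y + δ * dist x y := by
          refine add_le_add (hψlip i x y) ?_
          exact mul_le_mul_of_nonneg_left (hφ0lip x y) hδ0.le
      _ = dist x y * (1 + δ) := by ring
  -- the key algebraic inequality coming from the choice of `ε0`
  have h6 : δ * (A * (1 + B)) ≤ ε' := by
    have h := hδε0.le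
    rw [hε0def, le_div_iff₀ (by positivity : (0:ℝ) < A * (1 + B))] at h
    linarith [h]
  have hkey : (1 + δ) * A ≤ (1 - δ * A) * B := by
    have hBA : B = A + ε' := hBdef
    nlinarith [h6, hA, hδ0]
  have h1mδA : (0 : ℝ) < 1 - δ * A := by
    have hδA : δ * A < ε0 * A := mul_lt_mul_of_pos_right hδε0 hA
    have hε0A : ε0 * A = ε' / (1 + B) := by
      rw [hε0def]; field_simp
    have : ε' / (1 + B) < 1 := by
      rw [div_lt_one (by positivity)]
      have : A + ε' = B := hBdef.symm
      linarith
    linarith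
  -- lower bound
  have hφlow : ∀ x y : X, dist x y / B ≤ ∑ i, (1 / (m : ℝ)) * |φ i x - φ i y| := by
    intro x y
    set T : ℝ := ∑ i, (1 / (m : ℝ)) * |φ i x - φ i y| with hTdef
    have hT0 : 0 ≤ T :=
      Finset.sum_nonneg fun i _ => mul_nonneg (by positivity) (abs_nonneg _)
    have hstep : ∀ i : Fin m,
        |ψ i x - ψ i y| ≤ (1 + δ) * |φ i x - φ i y| + δ * dist x y := by
      intro i
      have habs : (1 + δ) * |φ i x - φ i y| = |ψ i x + δ * φ0 x - (ψ i y + δ * φ0 y)| := by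
        rw [hφdef]
        rw [div_sub_div_same, abs_div, abs_of_pos h1δ]
        field_simp
      have h1 : |ψ i x - ψ i y| ≤
          |ψ i x + δ * φ0 x - (ψ i y + δ * φ0 y)| + δ * |φ0 x - φ0 y| := by
        have := abs_add_le (ψ i x + δ * φ0 x - (ψ i y + δ * φ0 y)) (δ * (φ0 y - φ0 x))
        have heq : ψ i x + δ * φ0 x - (ψ i y + δ * φ0 y) + δ * (φ0 y - φ0 x) =
            ψ i x - ψ i y := by ring
        rw [heq] at this
        calc |ψ i x - ψ i y| ≤
            |ψ i x + δ * φ0 x - (ψ i y + δ * φ0 y)| + |δ * (φ0 y - φ0 x)| := this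
          _ = |ψ i x + δ * φ0 x - (ψ i y + δ * φ0 y)| + δ * |φ0 y - φ0 x| := by
              rw [abs_mul, abs_of_pos hδ0]
          _ = |ψ i x + δ * φ0 x - (ψ i y + δ * φ0 y)| + δ * |φ0 x - φ0 y| := by
              rw [abs_sub_comm (φ0 y)]
      have h2 : δ * |φ0 x - φ0 y| ≤ δ * dist x y :=
        mul_le_mul_of_nonneg_left (hφ0lip x y) hδ0.le
      rw [habs]
      linarith
    have hcard : ∑ _i : Fin m, (1 / (m : ℝ)) = 1 := by
      rw [Finset.sum_const, Finset.card_univ, Fintype.card_fin, nsmul_eq_mul]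
      field_simp
    have hsum3 : ∑ i, (1 / (m : ℝ)) * |ψ i x - ψ i y| ≤ (1 + δ) * T + δ * dist x y := by
      calc ∑ i, (1 / (m : ℝ)) * |ψ i x - ψ i y|
          ≤ ∑ i, (1 / (m : ℝ)) * ((1 + δ) * |φ i x - φ i y| + δ * dist x y) := by
            refine Finset.sum_le_sum fun i _ => ?_
            exact mul_le_mul_of_nonneg_left (hstep i) (by positivity)
        _ = (1 + δ) * T + δ * dist x y := by
            rw [hTdef, Finset.mul_sum]
            simp only [mul_add]
            rw [Finset.sum_add_distrib, ← Finset.sum_mul, hcard, one_mul]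
            congr 1
            refine Finset.sum_congr rfl fun i _ => ?_
            ring
    have hd1 : dist x y ≤ A * ((1 + δ) * T + δ * dist x y) := by
      have := le_trans (hψlow x y) hsum3
      rw [div_le_iff₀ hA] at this
      linarith [this]
    have hprod : (1 + δ) * A * T ≤ (1 - δ * A) * B * T :=
      mul_le_mul_of_nonneg_right hkey hT0
    rw [div_le_iff₀ hB]
    nlinarith [hd1, hprod, h1mδA, dist_nonneg (x := x) (y := y)]
  -- conclude: membership in the defining set of `c1dom` with constant `B = m*C + ε'`
  have hmem : ENNReal.ofReal B ∈ { D : ℝ≥0∞ | ∃ C : ℝ, 0 < C ∧ D = ENNReal.ofReal C ∧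
      ∃ (φ : Fin m → X → ℝ) (α : Fin m → ℝ),
        (∀ i, Function.Injective (φ i)) ∧
        (∀ i, ∀ x y : X, |φ i x - φ i y| ≤ dist x y) ∧
        (∀ i, 0 ≤ α i) ∧ (∑ i, α i) = 1 ∧
        ∀ x y : X, dist x y / C ≤ ∑ i, α i * |φ i x - φ i y| } := by
    refine ⟨B, hB, rfl, φ, fun _ => 1 / m, hφinj, hφlip, fun _ => by positivity, ?_, hφlow⟩
    rw [Finset.sum_const, Finset.card_univ, Fintype.card_fin, nsmul_eq_mul]
    field_simp
  calc c1dom (dist : X → X → ℝ) m ≤ ENNReal.ofReal B := sInf_le hmem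
    _ = ENNReal.ofReal (↑m * C) + ENNReal.ofReal ε' := by
        rw [hBdef, hAdef, ENNReal.ofReal_add hA.le hε'.le]
    _ = ENNReal.ofReal (↑m * C) + ε := by rw [hε'def, ENNReal.ofReal_coe_nnreal]

lemma c1dom_le_mul_cEmb {X : Type*} [MetricSpace X] [Fintype X] (hp : 1 ≤ p) (hm : 1 ≤ m) :
    c1dom (dist : X → X → ℝ) m ≤
      (m : ℝ≥0∞) * cEmb (dist : X → X → ℝ) (lpDist m p) := by
  have hm0 : (m : ℝ≥0∞) ≠ 0 := by
    simp only [ne_eq, Nat.cast_eq_zero]; omega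
  have hmtop : (m : ℝ≥0∞) ≠ ⊤ := ENNReal.natCast_ne_top m
  rw [mul_comm, ← ENNReal.div_le_iff_le_mul (Or.inl hm0) (Or.inl hmtop)]
  refine le_sInf ?_
  rintro D ⟨C, hC, rfl, f, hf⟩
  rw [ENNReal.div_le_iff_le_mul (Or.inl hm0) (Or.inl hmtop)]
  calc c1dom (dist : X → X → ℝ) m ≤ ENNReal.ofReal (↑m * C) :=
        c1dom_le_of_biLip hp hm hC hf
    _ = ENNReal.ofReal C * (m : ℝ≥0∞) := by
        rw [mul_comm, ENNReal.ofReal_mul hC.le, ENNReal.ofReal_natCast, mul_comm]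

end Statement10Aux

/-- For a finite metric space `X` and `m ∈ ℕ`: `c_1^{m,dom}(X,d) < ∞`
iff `X` biLipschitz embeds into `ℓ1^m`; quantitatively
`c_{ℓ1^m}(X) ≤ c_1^{m,dom}(X) ≤ m · c_{ℓ1^m}(X)`, and for every `p ≥ 1`,
`c_{ℓp^m}(X) ≤ c_1^{m,dom}(X) ≤ m^{2-1/p} · c_{ℓp^m}(X)`. -/
theorem statement10 (X : Type u) [MetricSpace X] [Fintype X] (m : ℕ) (hm : 1 ≤ m) :
    (c1dom (dist : X → X → ℝ) m ≠ ⊤ ↔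
      ∃ (C : ℝ) (f : X → Fin m → ℝ), BiLipWith (dist : X → X → ℝ) (l1Dist m) C f) ∧
    cEmb (dist : X → X → ℝ) (l1Dist m) ≤ c1dom (dist : X → X → ℝ) m ∧
    c1dom (dist : X → X → ℝ) m ≤ (m : ℝ≥0∞) * cEmb (dist : X → X → ℝ) (l1Dist m) ∧
    ∀ p : ℝ, 1 ≤ p →
      cEmb (dist : X → X → ℝ) (lpDist m p) ≤ c1dom (dist : X → X → ℝ) m ∧
      c1dom (dist : X → X → ℝ) m ≤
        ENNReal.ofReal ((m : ℝ) ^ ((2 : ℝ) - 1 / p)) *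
          cEmb (dist : X → X → ℝ) (lpDist m p) := by
  refine ⟨⟨fun _ => exists_emb hm, fun _ => c1dom_ne_top' hm⟩, ?_, ?_, fun p hp => ⟨?_, ?_⟩⟩
  · rw [l1Dist_eq_lpDist]
    exact cEmb_le_c1dom le_rfl
  · rw [l1Dist_eq_lpDist]
    exact c1dom_le_mul_cEmb le_rfl hm
  · exact cEmb_le_c1dom hp
  · have hp0 : 0 < p := lt_of_lt_of_le one_pos hp
    have h1 : (m : ℝ≥0∞) ≤ ENNReal.ofReal ((m : ℝ) ^ ((2 : ℝ) - 1 / p)) := by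
      have hm1 : (1 : ℝ) ≤ (m : ℝ) := by exact_mod_cast hm
      have hexp : (1 : ℝ) ≤ 2 - 1 / p := by
        have : 1 / p ≤ 1 := by
          rw [div_le_one hp0]; exact hp
        linarith
      have h2 : (m : ℝ) ^ (1 : ℝ) ≤ (m : ℝ) ^ ((2 : ℝ) - 1 / p) :=
        Real.rpow_le_rpow_of_exponent_le hm1 hexp
      rw [Real.rpow_one] at h2
      calc (m : ℝ≥0∞) = ENNReal.ofReal (m : ℝ) := (ENNReal.ofReal_natCast m).symm
        _ ≤ ENNReal.ofReal ((m : ℝ) ^ ((2 : ℝ) - 1 / p)) := ENNReal.ofReal_le_ofReal h2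
    calc c1dom (dist : X → X → ℝ) m ≤
          (m : ℝ≥0∞) * cEmb (dist : X → X → ℝ) (lpDist m p) := c1dom_le_mul_cEmb hp hm
      _ ≤ ENNReal.ofReal ((m : ℝ) ^ ((2 : ℝ) - 1 / p)) *
          cEmb (dist : X → X → ℝ) (lpDist m p) := mul_le_mul_left h1 _

end Lamplighter
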